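/- Let H be a complex Hilbert space, T : dom T ⊆ H → H a densely defined self-adjoint Fredholm operator, Π a finite rank orthogonal projection on H, and α > 0. Then T + iαΠ is invertible (bijective from dom T onto H) if and only if rg T + rg Π = H (the sum need not be direct). -/

import Mathlib

open LinearPMap

local notation "⟪" x ", " y "⟫" => @inner ℂ _ _ x y

private lemma pmap_apply_congr {H : Type*} [NormedAddCommGroup H] [InnerProductSpace ℂ H]
    {A B : H →ₗ.[ℂ] H} (h : A = B) (x : H) (hx : x ∈ A.domain) :
    A ⟨x, hx⟩ = B ⟨x, h ▸ hx⟩ := by subst h; rfl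

section Helpers
variable {H : Type*} [NormedAddCommGroup H] [InnerProductSpace ℂ H] [CompleteSpace H]
  (T : H →ₗ.[ℂ] H) (hdense : Dense (T.domain : Set H)) (hsa : IsSelfAdjoint T)

include hdense hsa in
private lemma Tsymm' : ∀ u v : T.domain, ⟪T u, (v : H)⟫ = ⟪(u : H), T v⟫ := by
  have h := LinearPMap.adjoint_isFormalAdjoint (T := T) hdense
  rw [LinearPMap.isSelfAdjoint_def] at hsa
  rw [hsa] at h
  exact h

include hdense hsa in
private lemma Textract' (v w : H) (h : ∀ x : T.domain, ⟪w, (x : H)⟫ = ⟪v, T x⟫) :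
    ∃ hv : v ∈ T.domain, T ⟨v, hv⟩ = w := by
  rw [LinearPMap.isSelfAdjoint_def] at hsa
  have hmem : v ∈ T†.domain := LinearPMap.mem_adjoint_domain_of_exists v ⟨w, h⟩
  have hval : T† ⟨v, hmem⟩ = w := LinearPMap.adjoint_apply_eq hdense _ h
  exact ⟨hsa ▸ hmem, by rw [← pmap_apply_congr hsa v hmem]; exact hval⟩
end Helpers

theorem stmt1 {H : Type*} [NormedAddCommGroup H] [InnerProductSpace ℂ H] [CompleteSpace H]
    (T : H →ₗ.[ℂ] H) (hdense : Dense (T.domain : Set H))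
    (hsa : IsSelfAdjoint T)
    (hclosed : IsClosed ((LinearMap.range T.toFun : Submodule ℂ H) : Set H))
    (hker : FiniteDimensional ℂ (LinearMap.ker T.toFun))
    (hcoker : FiniteDimensional ℂ (H ⧸ LinearMap.range T.toFun))
    (P : H →L[ℂ] H) (hPsa : IsSelfAdjoint P) (hPidem : P ∘L P = P)
    (hPfin : FiniteDimensional ℂ (LinearMap.range (P : H →ₗ[ℂ] H)))
    (α : ℝ) (hα : 0 < α) :
    Function.Bijective (fun u : T.domain => T u + (Complex.I * (α : ℂ)) • P (u : H)) ↔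
      LinearMap.range T.toFun ⊔ LinearMap.range (P : H →ₗ[ℂ] H) = ⊤ := by
  classical
  have hPsymm : ∀ x y : H, ⟪P x, y⟫ = ⟪x, P y⟫ := hPsa.isSymmetric
  have hPP : ∀ x : H, P (P x) = P x := fun x => by
    conv_rhs => rw [← hPidem]
    rfl
  set c : ℂ := Complex.I * (α : ℂ) with hc
  have hc0 : c ≠ 0 := by
    simp [hc, Complex.ext_iff, ne_of_gt hα]
  set R : Submodule ℂ H := LinearMap.range T.toFun with hRdef
  set F : Submodule ℂ H := LinearMap.range (P : H →ₗ[ℂ] H) with hFdef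
  set N : Submodule ℂ H := (LinearMap.ker T.toFun).map T.domain.subtype with hNdef
  haveI : CompleteSpace R := hclosed.completeSpace_coe
  haveI : FiniteDimensional ℂ F := hPfin
  haveI : FiniteDimensional ℂ N := by
    rw [hNdef]; infer_instance
  have hsymm : ∀ u v : T.domain, ⟪T u, (v : H)⟫ = ⟪(u : H), T v⟫ := Tsymm' T hdense hsa
  -- membership in N
  have hmemN : ∀ v : H, v ∈ N ↔ ∃ hv : v ∈ T.domain, T ⟨v, hv⟩ = 0 := by
    intro v
    constructor
    · rintro ⟨k, hk, rfl⟩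
      exact ⟨k.2, hk⟩
    · rintro ⟨hv, h⟩
      exact ⟨⟨v, hv⟩, h, rfl⟩
  -- Rᗮ = N
  have hRN : Rᗮ = N := by
    ext v
    rw [Submodule.mem_orthogonal]
    constructor
    · intro hv
      have h : ∀ x : T.domain, ⟪(0 : H), (x : H)⟫ = ⟪v, T x⟫ := by
        intro x
        rw [inner_zero_left, ← inner_conj_symm, hv (T x) ⟨x, rfl⟩]
        simp
      obtain ⟨hv', hT0⟩ := Textract' T hdense hsa v 0 h
      exact (hmemN v).2 ⟨hv', hT0⟩
    · intro hvN u hu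
      obtain ⟨x, rfl⟩ := hu
      obtain ⟨hv', hT0⟩ := (hmemN v).1 hvN
      calc ⟪T x, v⟫ = ⟪(x : H), T ⟨v, hv'⟩⟫ := hsymm x ⟨v, hv'⟩
        _ = 0 := by rw [hT0, inner_zero_right]
  -- the kernel dichotomy
  have hker0 : ∀ u : T.domain, T u + c • P (u : H) = 0 → (P (u : H) = 0 ∧ T u = 0) := by
    intro u h
    have h1 : ⟪(u : H), T u⟫ + c * ((‖P (u : H)‖ : ℂ) ^ 2) = 0 := by
      have := congrArg (fun w => ⟪(u : H), w⟫) h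
      simp only [inner_add_right, inner_smul_right, inner_zero_right] at this
      rw [← hPP (u : H), ← hPsymm, inner_self_eq_norm_sq_to_K] at this
      exact this
    have hre : (⟪(u : H), T u⟫).im = 0 := by
      have : (starRingEnd ℂ) ⟪(u : H), T u⟫ = ⟪(u : H), T u⟫ := by
        rw [inner_conj_symm]; exact hsymm u u
      rw [Complex.conj_eq_iff_im] at this
      exact this
    have him2 : α * ‖P (u : H)‖ ^ 2 = 0 := by
      have him := congrArg Complex.im h1
      simp only [Complex.add_im, Complex.zero_im, hre, zero_add, hc,
        ← Complex.ofReal_pow, Complex.mul_im, Complex.mul_re, Complex.I_re, Complex.I_im,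
        Complex.ofReal_re, Complex.ofReal_im] at him
      linarith
    have hnorm : ‖P (u : H)‖ = 0 := by
      have h2 : ‖P (u : H)‖ ^ 2 = 0 := by
        rcases mul_eq_zero.1 him2 with h' | h'
        · exact absurd h' (ne_of_gt hα)
        · exact h'
      nlinarith [norm_nonneg (P (u : H))]
    have hPu : P (u : H) = 0 := norm_eq_zero.1 hnorm
    refine ⟨hPu, ?_⟩
    rw [hPu, smul_zero, add_zero] at h
    exact h

  -- the linear version of the map
  let Pl : H →ₗ[ℂ] H := (P : H →ₗ[ℂ] H)
  let Sl : T.domain →ₗ[ℂ] H := T.toFun + c • (Pl ∘ₗ T.domain.subtype)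
  have hSlapp : ∀ u : T.domain, Sl u = T u + c • P (u : H) := by
    intro u
    simp [Sl, Pl]
  have hSfun : (fun u : T.domain => T u + c • P (u : H)) = ⇑Sl := by
    funext u; rw [hSlapp]
  rw [hSfun]
  -- injectivity from the condition
  have hinj_of_top : (R ⊔ F = ⊤) → ∀ u : T.domain, Sl u = 0 → u = 0 := by
    intro htop u hu
    rw [hSlapp] at hu
    obtain ⟨hPu, hTu⟩ := hker0 u hu
    have horth : (u : H) ∈ (R ⊔ F)ᗮ := by
      rw [Submodule.mem_orthogonal]
      intro w hw
      obtain ⟨r, hr, f, hf, rfl⟩ := Submodule.mem_sup.1 hw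
      obtain ⟨x, rfl⟩ := hr
      obtain ⟨y, rfl⟩ := hf
      rw [inner_add_left]
      have h1 : ⟪T x, (u : H)⟫ = 0 := by rw [hsymm x u, hTu, inner_zero_right]
      have h2 : ⟪(P : H →ₗ[ℂ] H) y, (u : H)⟫ = 0 := by
        show ⟪P y, (u : H)⟫ = 0
        rw [hPsymm, hPu, inner_zero_right]
      have hcast : (T.toFun x : H) = T x := rfl
      rw [hcast, h1, h2, add_zero]
    rw [htop, Submodule.top_orthogonal_eq_bot] at horth
    exact Subtype.ext (by simpa using horth)
  -- orthogonal projection onto R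
  let q : H →L[ℂ] R := R.orthogonalProjectionOnto
  let qL : H →ₗ[ℂ] R := q.toLinearMap
  let qperp : H →ₗ[ℂ] H := LinearMap.id - R.subtype ∘ₗ qL
  have hqperp_apply : ∀ x : H, qperp x = x - (q x : H) := fun x => rfl
  have hqperpRperp : ∀ x : H, qperp x ∈ Rᗮ := fun x =>
    Submodule.sub_starProjection_mem_orthogonal (K := R) x
  have hqperpN : ∀ x : H, qperp x ∈ N := fun x => hRN ▸ hqperpRperp x
  constructor
  · -- forward direction
    intro hbij
    rw [Submodule.eq_top_iff']
    intro x
    set F2 : Submodule ℂ H := F.map qperp with hF2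
    haveI : FiniteDimensional ℂ F2 := inferInstance
    haveI : CompleteSpace F2 := FiniteDimensional.complete ℂ F2
    have hF2sub : F2 ≤ R ⊔ F := by
      rintro _ ⟨f, hf, rfl⟩
      rw [hqperp_apply]
      exact Submodule.sub_mem _ (Submodule.mem_sup_right hf)
        (Submodule.mem_sup_left (Submodule.coe_mem (q f)))
    have hF2perp : F2 ≤ Rᗮ := by rintro _ ⟨f, hf, rfl⟩; exact hqperpRperp f
    set y : H := qperp x with hy
    set k2 : H := (F2.orthogonalProjectionOnto y : H) with hk2
    set z : H := y - k2 with hzdef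
    have hzRperp : z ∈ Rᗮ :=
      Submodule.sub_mem _ (hqperpRperp x) (hF2perp (Submodule.coe_mem _))
    have hzperp : ∀ w ∈ R ⊔ F, ⟪w, z⟫ = 0 := by
      intro w hw
      obtain ⟨r, hr, f, hf, rfl⟩ := Submodule.mem_sup.1 hw
      rw [inner_add_left]
      have h1 : ⟪r, z⟫ = 0 := (Submodule.mem_orthogonal _ _).1 hzRperp r hr
      have h2 : ⟪f, z⟫ = 0 := by
        have hzF2 : z ∈ F2ᗮ := Submodule.sub_starProjection_mem_orthogonal (K := F2) y
        have hfz : f = (q f : H) + qperp f := by rw [hqperp_apply]; abel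
        rw [hfz, inner_add_left,
          (Submodule.mem_orthogonal _ _).1 hzRperp _ (Submodule.coe_mem (q f)),
          (Submodule.mem_orthogonal _ _).1 hzF2 _ ⟨f, hf, rfl⟩, add_zero]
      rw [h1, h2, add_zero]
    obtain ⟨u, hu⟩ := hbij.2 z
    have hz0 : z = 0 := by
      have hzz : ⟪z, z⟫ = 0 := by
        have hTuz : ⟪z, T u⟫ = 0 := by
          have h := hzperp (T u) (Submodule.mem_sup_left ⟨u, rfl⟩)
          rw [← inner_conj_symm, h]
          simp
        have hPuz : ⟪z, P (u : H)⟫ = 0 := by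
          have h := hzperp (P (u : H)) (Submodule.mem_sup_right ⟨(u : H), rfl⟩)
          rw [← inner_conj_symm, h]
          simp
        calc ⟪z, z⟫ = ⟪z, Sl u⟫ := by rw [hu]
          _ = ⟪z, T u⟫ + c * ⟪z, P (u : H)⟫ := by
              rw [hSlapp, inner_add_right, inner_smul_right]
          _ = 0 := by rw [hTuz, hPuz, mul_zero, add_zero]
      exact inner_self_eq_zero.1 hzz
    have hx : x = (q x : H) + k2 := by
      have h1 : y = k2 := by rw [hzdef, sub_eq_zero] at hz0; exact hz0
      have h2 : y = x - (q x : H) := hqperp_apply x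
      rw [← h1, h2]; abel
    rw [hx]
    exact Submodule.add_mem _ (Submodule.mem_sup_left (Submodule.coe_mem (q x)))
      (hF2sub (Submodule.coe_mem _))
  · -- backward direction
    intro htop
    have hinj : Function.Injective Sl := by
      apply LinearMap.ker_eq_bot.1
      rw [Submodule.eq_bot_iff]
      intro u hu
      exact hinj_of_top htop u (LinearMap.mem_ker.1 hu)
    refine ⟨hinj, ?_⟩
    -- the right inverse of T on R
    set D' : Submodule ℂ H := T.domain ⊓ R with hD'
    let ι : D' →ₗ[ℂ] T.domain := Submodule.inclusion inf_le_left
    have hιcoe : ∀ x : D', ((ι x : T.domain) : H) = (x : H) := fun x => rfl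
    let g : D' →ₗ[ℂ] H := T.toFun ∘ₗ ι
    have hgR : ∀ x : D', g x ∈ R := fun x => ⟨ι x, rfl⟩
    let τ : D' →ₗ[ℂ] R := g.codRestrict R hgR
    have hτcoe : ∀ x : D', (τ x : H) = T (ι x) := fun x => rfl
    have hτbij : Function.Bijective τ := by
      constructor
      · apply LinearMap.ker_eq_bot.1
        rw [Submodule.eq_bot_iff]
        intro x hx
        rw [LinearMap.mem_ker] at hx
        have hTx : T (ι x) = 0 := by
          have := congrArg Subtype.val hx
          rwa [hτcoe] at this
        have hxN : (x : H) ∈ N := by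
          refine (hmemN _).2 ⟨(Submodule.mem_inf.1 x.2).1, ?_⟩
          have : ι x = ⟨(x : H), (Submodule.mem_inf.1 x.2).1⟩ := Subtype.ext rfl
          rwa [this] at hTx
        have hxR : (x : H) ∈ R := (Submodule.mem_inf.1 x.2).2
        have hx0 : (x : H) = 0 := by
          have hperp : (x : H) ∈ Rᗮ := hRN ▸ hxN
          exact inner_self_eq_zero.1 ((Submodule.mem_orthogonal _ _).1 hperp _ hxR)
        exact Subtype.ext hx0
      · intro r
        obtain ⟨u, hu⟩ := Submodule.coe_mem r
        have hnN : qperp (u : H) ∈ N := hqperpN _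
        obtain ⟨hn', hTn⟩ := (hmemN _).1 hnN
        have hvdom : ((q (u : H) : H)) ∈ T.domain := by
          have heq : (q (u : H) : H) = (u : H) - qperp (u : H) := by
            rw [hqperp_apply]; abel
          rw [heq]
          exact Submodule.sub_mem _ u.2 hn'
        have hvR : ((q (u : H) : H)) ∈ R := Submodule.coe_mem _
        refine ⟨⟨(q (u : H) : H), hvdom, hvR⟩, ?_⟩
        apply Subtype.ext
        rw [hτcoe]
        have heq : ι ⟨(q (u : H) : H), hvdom, hvR⟩ = u - ⟨qperp (u : H), hn'⟩ := by
          apply Subtype.ext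
          show (q (u : H) : H) = (u : H) - qperp (u : H)
          rw [hqperp_apply]; abel
        rw [heq, T.map_sub, hTn, sub_zero]
        exact hu
    let eqv : D' ≃ₗ[ℂ] R := LinearEquiv.ofBijective τ hτbij
    let GD : R →ₗ[ℂ] T.domain := ι ∘ₗ (eqv.symm : R →ₗ[ℂ] D')
    have hGD : ∀ r : R, T (GD r) = (r : H) := by
      intro r
      have h1 : τ (eqv.symm r) = r := by
        have := eqv.apply_symm_apply r
        rwa [LinearEquiv.ofBijective_apply] at this
      have h2 := congrArg Subtype.val h1
      rw [hτcoe] at h2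
      exact h2
    -- the finite dimensional system
    let A : H →ₗ[ℂ] H := Pl ∘ₗ T.domain.subtype ∘ₗ GD ∘ₗ qL
    have hA_mem : ∀ x : H, A x ∈ F := fun x => ⟨_, rfl⟩
    have hA_apply : ∀ x : H, A x = P ((GD (qL x) : H)) := fun x => rfl
    let e1 : F × N →ₗ[ℂ] H := F.subtype ∘ₗ LinearMap.fst ℂ F N
    let e2 : F × N →ₗ[ℂ] H := N.subtype ∘ₗ LinearMap.snd ℂ F N
    let M1 : F × N →ₗ[ℂ] H := e1 + c • (A ∘ₗ e1) - Pl ∘ₗ e2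
    have hM1mem : ∀ w, M1 w ∈ F := by
      intro w
      refine Submodule.sub_mem _ (Submodule.add_mem _ w.1.2
        (Submodule.smul_mem _ _ (hA_mem _))) ⟨_, rfl⟩
    have hM1app : ∀ (p : F) (n : N),
        M1 (p, n) = (p : H) + c • A (p : H) - P (n : H) := by
      intro p n; simp [M1, e1, e2, Pl]
    let M2 : F × N →ₗ[ℂ] H := c • (qperp ∘ₗ e1)
    have hM2mem : ∀ w, M2 w ∈ N := fun w => Submodule.smul_mem _ _ (hqperpN _)
    have hM2app : ∀ (p : F) (n : N), M2 (p, n) = c • qperp (p : H) := by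
      intro p n; simp [M2, e1]
    let L : (F × N) →ₗ[ℂ] (F × N) :=
      (M1.codRestrict F hM1mem).prod (M2.codRestrict N hM2mem)
    have hLcomp1 : ∀ (w w' : F × N), L w = w' → M1 w = (w'.1 : H) := by
      intro w w' hww'
      have := congrArg (fun v : F × N => ((v.1 : H))) hww'
      simpa [L] using this
    have hLcomp2 : ∀ (w w' : F × N), L w = w' → M2 w = (w'.2 : H) := by
      intro w w' hww'
      have := congrArg (fun v : F × N => ((v.2 : H))) hww'
      simpa [L] using this
    have hLinj : Function.Injective L := by
      apply LinearMap.ker_eq_bot.1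
      rw [Submodule.eq_bot_iff]
      rintro ⟨p, n⟩ hpn
      rw [LinearMap.mem_ker] at hpn
      have h1 : (p : H) + c • A (p : H) - P (n : H) = 0 := by
        have h1' := hLcomp1 _ _ hpn
        rw [hM1app p n] at h1'
        simpa using h1'
      have h2 : qperp (p : H) = 0 := by
        have h2' : c • qperp (p : H) = 0 := by
          have h2'' := hLcomp2 _ _ hpn
          rw [hM2app p n] at h2''
          simpa using h2''
        rcases smul_eq_zero.1 h2' with h | h
        · exact absurd h hc0
        · exact h
      have hpq : (p : H) = (q (p : H) : H) := by
        have heq := hqperp_apply (p : H)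
        rw [h2] at heq
        exact sub_eq_zero.1 heq.symm
      have hpR : (p : H) ∈ R := by
        rw [hpq]; exact Submodule.coe_mem _
      have hqp : qL (p : H) = ⟨(p : H), hpR⟩ := Subtype.ext hpq.symm
      obtain ⟨hn', hTn⟩ := (hmemN _).1 n.2
      set u : T.domain := GD ((-c) • ⟨(p : H), hpR⟩) + ⟨(n : H), hn'⟩ with hudef
      have hTu : T u = (-c) • (p : H) := by
        rw [hudef, T.map_add, hGD, hTn, add_zero]
        simp
      have hPGD : P ((GD ((-c) • (⟨(p : H), hpR⟩ : R)) : T.domain) : H)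
          = (-c) • A (p : H) := by
        rw [hA_apply, hqp, LinearMap.map_smul]
        simp
      have hPu : P ((u : H)) = (p : H) := by
        have hcoe : (u : H) = ((GD ((-c) • (⟨(p : H), hpR⟩ : R)) : T.domain) : H) + (n : H) := rfl
        rw [hcoe, _root_.map_add, hPGD]
        have hAc : c • A (p : H) = P (n : H) - (p : H) :=
          eq_sub_of_add_eq' (sub_eq_zero.1 h1)
        rw [neg_smul, hAc]
        abel
      have hSu : Sl u = 0 := by
        rw [hSlapp, hTu, hPu, neg_smul]
        abel
      have hu0 : u = 0 := hinj_of_top htop u hSu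
      have hp0 : (p : H) = 0 := by
        have hz := hTu
        rw [hu0, LinearPMap.map_zero] at hz
        rcases smul_eq_zero.1 hz.symm with h | h
        · exact absurd (neg_eq_zero.1 h) hc0
        · exact h
      have hn0 : (n : H) = 0 := by
        have hr0 : ((-c) • (⟨(p : H), hpR⟩ : R)) = (0 : R) := by
          apply Subtype.ext
          show (-c) • (p : H) = 0
          rw [hp0, smul_zero]
        have hun : u = ⟨(n : H), hn'⟩ := by
          rw [hudef, hr0, LinearMap.map_zero, zero_add]
        rw [hu0] at hun
        have := congrArg (Subtype.val : T.domain → H) hun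
        simpa using this.symm
      exact Prod.ext (Subtype.ext hp0) (Subtype.ext hn0)
    have hLsurj := LinearMap.injective_iff_surjective.1 hLinj
    intro f
    obtain ⟨⟨p, n⟩, hw⟩ := hLsurj (⟨A f, hA_mem f⟩, ⟨qperp f, hqperpN f⟩)
    have hA' : (p : H) + c • A (p : H) - P (n : H) = A f := by
      have := hLcomp1 _ _ hw
      rwa [hM1app p n] at this
    have hB' : c • qperp (p : H) = qperp f := by
      have := hLcomp2 _ _ hw
      rwa [hM2app p n] at this
    obtain ⟨hn', hTn⟩ := (hmemN _).1 n.2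
    set u : T.domain := GD (qL (f - c • (p : H))) + ⟨(n : H), hn'⟩ with hudef
    refine ⟨u, ?_⟩
    have hTu : T u = (qL (f - c • (p : H)) : H) := by
      rw [hudef, T.map_add, hGD, hTn, add_zero]
    have hq' : (qL (f - c • (p : H)) : H) = f - c • (p : H) := by
      have hq0 : qperp (f - c • (p : H)) = 0 := by
        rw [_root_.map_sub, LinearMap.map_smul, hB', sub_self]
      have heq := hqperp_apply (f - c • (p : H))
      rw [hq0] at heq
      exact (sub_eq_zero.1 heq.symm).symm
    have hPu : P ((u : H)) = (p : H) := by
      have hcoe : (u : H) = ((GD (qL (f - c • (p : H))) : T.domain) : H) + (n : H) := rfl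
      rw [hcoe, _root_.map_add]
      have hPGD : P ((GD (qL (f - c • (p : H))) : T.domain) : H) = A (f - c • (p : H)) :=
        (hA_apply _).symm
      rw [hPGD, _root_.map_sub, LinearMap.map_smul, ← hA']
      abel
    show T u + c • P ((u : H)) = f
    rw [hTu, hq', hPu]
    abel
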